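/- arXiv:quant-ph/0212109 — 4 statements merged into one kernel-verified Lean document; each statement's English description precedes it below -/
import Mathlib

section
/- For every real γ, (-i) · (exp(-iπ/2 σ_z) exp(iπ/2 σ_y) ⊗ I) · exp(γ(i/2) σ_z⊗σ_z) · (exp(-iπ/2 σ_y) ⊗ exp(-iπ/2 σ_z)) = exp((π−γ)(i/2) σ_z⊗σ_z). -/
open Matrix Kronecker

noncomputable section

def σx : Matrix (Fin 2) (Fin 2) ℂ := !![0, 1; 1, 0]
def σy : Matrix (Fin 2) (Fin 2) ℂ := !![0, -Complex.I; Complex.I, 0]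
def σz : Matrix (Fin 2) (Fin 2) ℂ := !![1, 0; 0, -1]

/-- matrix exponential over ℂ. -/
def mexp {n : Type*} [Fintype n] [DecidableEq n]
    (A : Matrix n n ℂ) : Matrix n n ℂ := NormedSpace.exp A

set_option linter.unreachableTactic false
set_option linter.unnecessarySeqFocus false
set_option linter.unusedTactic false

lemma exp_diag2 (a b : ℂ) : mexp !![a, 0; 0, b] = !![Complex.exp a, 0; 0, Complex.exp b] := by
  have h : !![a, 0; 0, b] = diagonal ![a, b] := by
    ext i j; fin_cases i <;> fin_cases j <;> simp [diagonal]
  rw [mexp, h, Matrix.exp_diagonal]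
  ext i j
  fin_cases i <;> fin_cases j <;>
    simp [diagonal, Pi.coe_exp, Complex.exp_eq_exp_ℂ]

lemma smul_σz (c : ℂ) : c • σz = !![c, 0; 0, -c] := by
  ext i j; fin_cases i <;> fin_cases j <;> simp [σz]

lemma exp_σz (c : ℂ) : mexp (c • σz) = !![Complex.exp c, 0; 0, Complex.exp (-c)] := by
  rw [smul_σz, ← exp_diag2]

def S : Matrix (Fin 2) (Fin 2) ℂ := !![1, 1; Complex.I, -Complex.I]
def Sinv : Matrix (Fin 2) (Fin 2) ℂ := !![1/2, -Complex.I/2; 1/2, Complex.I/2]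

lemma SSinv : S * Sinv = 1 := by
  ext i j; fin_cases i <;> fin_cases j <;>
    simp [S, Sinv, Matrix.mul_apply, Fin.sum_univ_two] <;> ring_nf <;>
    simp [Complex.I_sq] <;> ring

lemma SinvS : Sinv * S = 1 := by
  ext i j; fin_cases i <;> fin_cases j <;>
    simp [S, Sinv, Matrix.mul_apply, Fin.sum_univ_two] <;> ring_nf <;>
    simp [Complex.I_sq] <;> ring

def U : (Matrix (Fin 2) (Fin 2) ℂ)ˣ := ⟨S, Sinv, SSinv, SinvS⟩

lemma conj_σy (c : ℂ) : c • σy = U * (c • σz) * (↑U⁻¹ : Matrix (Fin 2) (Fin 2) ℂ) := by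
  show c • σy = S * (c • σz) * Sinv
  ext i j; fin_cases i <;> fin_cases j <;>
    simp [S, Sinv, σy, σz, Matrix.mul_apply, Fin.sum_univ_two] <;> ring_nf <;>
    simp [Complex.I_sq] <;> ring

lemma exp_σy (c : ℂ) : mexp (c • σy) =
    !![(Complex.exp c + Complex.exp (-c))/2, -Complex.I*(Complex.exp c - Complex.exp (-c))/2;
       Complex.I*(Complex.exp c - Complex.exp (-c))/2, (Complex.exp c + Complex.exp (-c))/2] := by
  rw [conj_σy, mexp, Matrix.exp_units_conj, ← mexp, exp_σz]
  show S * _ * Sinv = _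
  ext i j; fin_cases i <;> fin_cases j <;>
    simp [S, Sinv, Matrix.mul_apply, Fin.sum_univ_two] <;> ring_nf <;>
    simp [Complex.I_sq] <;> ring_nf

lemma kron_diag (c : ℂ) : c • (σz ⊗ₖ σz) =
    diagonal (fun p : Fin 2 × Fin 2 => if p.1 = p.2 then c else -c) := by
  ext ⟨i, j⟩ ⟨k, l⟩
  fin_cases i <;> fin_cases j <;> fin_cases k <;> fin_cases l <;>
    simp [σz, diagonal, Prod.ext_iff]

lemma exp_kron (c : ℂ) : mexp (c • (σz ⊗ₖ σz)) =
    diagonal (fun p : Fin 2 × Fin 2 => Complex.exp (if p.1 = p.2 then c else -c)) := by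
  rw [mexp, kron_diag, Matrix.exp_diagonal,
    show NormedSpace.exp (fun p : Fin 2 × Fin 2 => if p.1 = p.2 then c else -c) =
      fun p => Complex.exp (if p.1 = p.2 then c else -c) from
      funext fun p => by simp [Pi.coe_exp, Complex.exp_eq_exp_ℂ]]

lemma hI : Complex.exp (Complex.I * ((Real.pi / 2 : ℝ) : ℂ)) = Complex.I := by
  rw [show Complex.I * ((Real.pi / 2 : ℝ) : ℂ) = ((Real.pi/2 : ℝ) : ℂ) * Complex.I by ring,
    Complex.exp_mul_I, ← Complex.ofReal_cos, ← Complex.ofReal_sin,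
    Real.cos_pi_div_two, Real.sin_pi_div_two]
  simp

lemma hI' : Complex.exp (-Complex.I * ((Real.pi / 2 : ℝ) : ℂ)) = -Complex.I := by
  rw [show -Complex.I * ((Real.pi / 2 : ℝ) : ℂ) = -(Complex.I * ((Real.pi / 2 : ℝ) : ℂ)) by ring,
    Complex.exp_neg, hI, Complex.inv_I]

lemma h2 : Complex.exp ((Real.pi : ℂ) * (Complex.I / 2)) = Complex.I := by
  rw [show (Real.pi : ℂ) * (Complex.I / 2) = Complex.I * ((Real.pi / 2 : ℝ) : ℂ) by
    push_cast; ring, hI]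

set_option maxHeartbeats 2000000 in
theorem stmt3 (γ : ℝ) :
    (-Complex.I) •
        (((mexp ((-Complex.I * (Real.pi / 2 : ℝ)) • σz) *
            mexp ((Complex.I * (Real.pi / 2 : ℝ)) • σy)) ⊗ₖ (1 : Matrix (Fin 2) (Fin 2) ℂ)) *
          mexp (((γ : ℂ) * (Complex.I / 2)) • (σz ⊗ₖ σz)) *
          (mexp ((-Complex.I * (Real.pi / 2 : ℝ)) • σy) ⊗ₖ
            mexp ((-Complex.I * (Real.pi / 2 : ℝ)) • σz))) =
      mexp ((((Real.pi - γ : ℝ) : ℂ) * (Complex.I / 2)) • (σz ⊗ₖ σz)) := by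
  have e1 : Complex.exp (((Real.pi - γ : ℝ) : ℂ) * (Complex.I / 2)) =
      Complex.I * Complex.exp (-((γ : ℂ) * (Complex.I / 2))) := by
    rw [show (((Real.pi - γ : ℝ) : ℂ) * (Complex.I / 2)) =
      (Real.pi : ℂ) * (Complex.I / 2) + -((γ : ℂ) * (Complex.I / 2)) by push_cast; ring,
      Complex.exp_add, h2]
  have e2 : Complex.exp (-(((Real.pi - γ : ℝ) : ℂ) * (Complex.I / 2))) =
      -Complex.I * Complex.exp ((γ : ℂ) * (Complex.I / 2)) := by
    rw [show -(((Real.pi - γ : ℝ) : ℂ) * (Complex.I / 2)) =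
      -((Real.pi : ℂ) * (Complex.I / 2)) + ((γ : ℂ) * (Complex.I / 2)) by push_cast; ring,
      Complex.exp_add, Complex.exp_neg, h2, Complex.inv_I]
  have k1 : Complex.exp (-Complex.I * ((Real.pi / 2 : ℝ) : ℂ)) = -Complex.I := hI'
  have k2 : Complex.exp (-(-Complex.I * ((Real.pi / 2 : ℝ) : ℂ))) = Complex.I := by
    rw [show -(-Complex.I * ((Real.pi / 2 : ℝ) : ℂ)) = Complex.I * ((Real.pi / 2 : ℝ) : ℂ) by
      ring, hI]
  have k3 : Complex.exp (Complex.I * ((Real.pi / 2 : ℝ) : ℂ)) = Complex.I := hI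
  have k4 : Complex.exp (-(Complex.I * ((Real.pi / 2 : ℝ) : ℂ))) = -Complex.I := by
    rw [Complex.exp_neg, hI, Complex.inv_I]
  have h3 : Complex.I ^ 3 = -Complex.I := by
    simp [pow_succ, Complex.I_sq]
  have h4 : Complex.I ^ 4 = 1 := by
    simp [pow_succ, Complex.I_sq]
  have h5 : Complex.I ^ 5 = Complex.I := by
    simp [pow_succ, Complex.I_sq]
  have h7 : Complex.I ^ 7 = -Complex.I := by
    simp [pow_succ, Complex.I_sq]
  rw [exp_σz, exp_σy, exp_σy, exp_kron, exp_kron, k1, k2, k3, k4]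
  simp only [apply_ite Complex.exp, e1, e2]
  ext ⟨i, j⟩ ⟨k, l⟩
  fin_cases i <;> fin_cases j <;> fin_cases k <;> fin_cases l <;>
    simp [Matrix.mul_apply, Fintype.sum_prod_type, Fin.sum_univ_two, diagonal,
      Matrix.one_apply, Prod.ext_iff] <;> ring_nf <;>
    (try simp [Complex.I_sq, h3, h4, h5, h7]) <;> (try ring_nf)

end
end

section
/- Let γ ∈ (0, π/2), c ∈ (0, π/2], b ∈ [0, π] with cos c = sin²γ cos b + cos²γ, and p, q as above: p = sqrt((1 + tan(c/2)/tan γ)/2), q = sqrt((1 − tan(c/2)/tan γ)/2) (assume the radicands are nonnegative). Then p·q = cos(b/2)/(2 cos(c/2)). -/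
open Matrix Kronecker

noncomputable section

theorem stmt10 (γ c b : ℝ) (hγ : γ ∈ Set.Ioo 0 (Real.pi / 2))
    (hc : c ∈ Set.Ioc 0 (Real.pi / 2)) (hb : b ∈ Set.Icc 0 Real.pi)
    (hcb : Real.cos c = (Real.sin γ) ^ 2 * Real.cos b + (Real.cos γ) ^ 2)
    (hrad1 : 0 ≤ 1 + Real.tan (c / 2) / Real.tan γ)
    (hrad2 : 0 ≤ 1 - Real.tan (c / 2) / Real.tan γ)
    (p q : ℝ)
    (hp : p = Real.sqrt ((1 + Real.tan (c / 2) / Real.tan γ) / 2))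
    (hq : q = Real.sqrt ((1 - Real.tan (c / 2) / Real.tan γ) / 2)) :
    p * q = Real.cos (b / 2) / (2 * Real.cos (c / 2)) := by
  have hpi := Real.pi_pos
  have hsγ : 0 < Real.sin γ := Real.sin_pos_of_pos_of_lt_pi hγ.1 (by linarith [hγ.2])
  have hcγ : 0 < Real.cos γ := Real.cos_pos_of_mem_Ioo ⟨by linarith [hγ.1], hγ.2⟩
  have hcc2 : 0 < Real.cos (c / 2) := Real.cos_pos_of_mem_Ioo
    ⟨by nlinarith [hc.1], by nlinarith [hc.2]⟩
  have hcb2 : 0 ≤ Real.cos (b / 2) := Real.cos_nonneg_of_mem_Icc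
    ⟨by linarith [hb.1], by linarith [hb.2]⟩
  have hhalf : ∀ x : ℝ, Real.sin (x / 2) ^ 2 = (1 - Real.cos x) / 2 := by
    intro x
    have h := Real.cos_sq (x / 2)
    have h2 := Real.sin_sq_add_cos_sq (x / 2)
    rw [show 2 * (x / 2) = x by ring] at h
    linarith
  have hs : Real.sin (c / 2) ^ 2 = Real.sin γ ^ 2 * Real.sin (b / 2) ^ 2 := by
    rw [hhalf, hhalf]
    have := Real.sin_sq_add_cos_sq γ
    nlinarith [this]
  have hb2 : Real.sin (b / 2) ^ 2 + Real.cos (b / 2) ^ 2 = 1 := by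
    rw [add_comm]; exact Real.cos_sq_add_sin_sq _
  have hc2 : Real.sin (c / 2) ^ 2 + Real.cos (c / 2) ^ 2 = 1 := by
    rw [add_comm]; exact Real.cos_sq_add_sin_sq _
  have hγ2 : Real.sin γ ^ 2 + Real.cos γ ^ 2 = 1 := by
    rw [add_comm]; exact Real.cos_sq_add_sin_sq _
  have key : (1 + Real.tan (c / 2) / Real.tan γ) / 2 *
      ((1 - Real.tan (c / 2) / Real.tan γ) / 2) =
      (Real.cos (b / 2) / (2 * Real.cos (c / 2))) ^ 2 := by
    rw [Real.tan_eq_sin_div_cos, Real.tan_eq_sin_div_cos]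
    field_simp
    linear_combination (-1) *
      (Real.sin (c / 2) ^ 2 * hγ2 - Real.sin γ ^ 2 * hc2 + hs + Real.sin γ ^ 2 * hb2)
  rw [hp, hq, ← Real.sqrt_mul (by linarith), key, Real.sqrt_sq (by positivity)]

end
end

section
/- Let γ ∈ [π/4, π/2], c ∈ (0, π/2], b = arccos((cos c − cos²γ)/sin²γ), p = sqrt((1 + tan(c/2)/tan γ)/2), q = sqrt((1 − tan(c/2)/tan γ)/2), U₁ = [[ip, iq], [−q, p]], U₂ = [[ip, −q], [−iq, −p]]. Then U₁ · exp(i(γ/2)σ_z) · exp((b+π)(i/2)σ_y) · exp(i(γ/2)σ_z) · U₂ = exp(i(c/2)σ_z) as 2×2 matrices. -/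
open Matrix Kronecker

noncomputable section

lemma mexp_z (z : ℂ) : mexp (z • σz) = !![Complex.exp z, 0; 0, Complex.exp (-z)] := by
  have h : z • σz = Matrix.diagonal ![z, -z] := by
    ext i j
    fin_cases i <;> fin_cases j <;> simp [σz, Matrix.diagonal]
  rw [mexp, h, Matrix.exp_diagonal]
  ext i j
  fin_cases i <;> fin_cases j <;>
    simp [Matrix.diagonal, Complex.exp_eq_exp_ℂ, Pi.coe_exp]

lemma mexp_y (z : ℂ) : mexp (z • σy) =
    !![(Complex.exp z + Complex.exp (-z))/2, -Complex.I*(Complex.exp z - Complex.exp (-z))/2;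
       Complex.I*(Complex.exp z - Complex.exp (-z))/2, (Complex.exp z + Complex.exp (-z))/2] := by
  set P : Matrix (Fin 2) (Fin 2) ℂ := !![1, 1; Complex.I, -Complex.I] with hP
  set Q : Matrix (Fin 2) (Fin 2) ℂ := !![1/2, -Complex.I/2; 1/2, Complex.I/2] with hQ
  have hPQ : P * Q = 1 := by
    rw [hP, hQ, Matrix.mul_fin_two, Matrix.one_fin_two]
    ext i j
    fin_cases i <;> fin_cases j <;> simp <;> ring_nf <;> simp [Complex.I_sq]
  have hQP : Q * P = 1 := mul_eq_one_comm.mp hPQ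
  have hunit : IsUnit P := ⟨⟨P, Q, hPQ, hQP⟩, rfl⟩
  have hinv : P⁻¹ = Q := Matrix.inv_eq_right_inv hPQ
  have hkey : z • σy = P * (z • σz) * P⁻¹ := by
    rw [hinv, Matrix.mul_smul, Matrix.smul_mul]
    congr 1
    rw [hP, hQ, σz, σy, Matrix.mul_fin_two, Matrix.mul_fin_two]
    ext i j
    fin_cases i <;> fin_cases j <;> simp <;> ring_nf <;> simp [Complex.I_sq] <;> ring
  rw [mexp, hkey, Matrix.exp_conj P (z • σz) hunit, hinv]
  have h2 : NormedSpace.exp (z • σz) = !![Complex.exp z, 0; 0, Complex.exp (-z)] := mexp_z z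
  rw [h2, hP, hQ, Matrix.mul_fin_two, Matrix.mul_fin_two]
  ext i j
  fin_cases i <;> fin_cases j <;> simp <;> ring_nf <;> simp [Complex.I_sq] <;> ring

set_option maxHeartbeats 2000000 in
theorem stmt12 (γ c : ℝ) (hγ : γ ∈ Set.Icc (Real.pi / 4) (Real.pi / 2))
    (hc : c ∈ Set.Ioc 0 (Real.pi / 2))
    (b p q : ℝ)
    (hb : b = Real.arccos ((Real.cos c - (Real.cos γ) ^ 2) / (Real.sin γ) ^ 2))
    (hp : p = Real.sqrt ((1 + Real.tan (c / 2) / Real.tan γ) / 2))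
    (hq : q = Real.sqrt ((1 - Real.tan (c / 2) / Real.tan γ) / 2))
    (U₁ U₂ : Matrix (Fin 2) (Fin 2) ℂ)
    (hU₁ : U₁ = !![Complex.I * p, Complex.I * q; -q, p])
    (hU₂ : U₂ = !![Complex.I * p, -q; -Complex.I * q, -p]) :
    U₁ * mexp ((Complex.I * ((γ : ℂ) / 2)) • σz) *
        mexp ((((b + Real.pi : ℝ) : ℂ) * (Complex.I / 2)) • σy) *
        mexp ((Complex.I * ((γ : ℂ) / 2)) • σz) * U₂ =
      mexp ((Complex.I * ((c : ℂ) / 2)) • σz) := by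
  open Real in
  obtain ⟨hγ1, hγ2⟩ := hγ
  obtain ⟨hc1, hc2⟩ := hc
  have hπ := Real.pi_pos
  have hsγ : 0 < sin γ := sin_pos_of_pos_of_lt_pi (by linarith) (by linarith)
  have hcγ : 0 ≤ cos γ := cos_nonneg_of_mem_Icc ⟨by linarith, hγ2⟩
  have hsc : 0 < sin (c/2) := sin_pos_of_pos_of_lt_pi (by linarith) (by linarith)
  have hcc : 0 < cos (c/2) := cos_pos_of_mem_Ioo ⟨by linarith, by linarith⟩
  have hdiff : 0 ≤ sin (γ - c/2) := sin_nonneg_of_nonneg_of_le_pi (by linarith) (by linarith)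
  rw [sin_sub] at hdiff
  have pyγ := sin_sq_add_cos_sq γ
  have pyc := sin_sq_add_cos_sq (c/2)
  have hcosc : cos c = 1 - 2 * sin (c/2)^2 := by
    have h := Real.cos_sq (c/2)
    rw [show 2*(c/2) = c by ring] at h
    linarith
  have hcc0 : 0 ≤ cos c := cos_nonneg_of_mem_Icc ⟨by linarith, hc2⟩
  have hsc2 : sin γ ^ 2 - sin (c/2)^2 = sin γ ^2 * cos (c/2)^2 - sin (c/2)^2 * cos γ ^2 := by
    nlinarith
  have hWnn : 0 ≤ sin γ ^ 2 - sin (c/2)^2 := by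
    nlinarith [mul_nonneg hdiff (by positivity : (0:ℝ) ≤ sin γ * cos (c/2) + cos γ * sin (c/2))]
  have hcγsγ : cos γ ≤ sin γ := by
    have h4 : 0 ≤ sin (γ - π/4) := sin_nonneg_of_nonneg_of_le_pi (by linarith) (by linarith)
    rw [sin_sub, Real.cos_pi_div_four, Real.sin_pi_div_four] at h4
    nlinarith [Real.sq_sqrt (by norm_num : (0:ℝ) ≤ 2), Real.sqrt_pos.mpr (by norm_num : (0:ℝ) < 2)]
  have hK1 : (cos c - cos γ^2)/sin γ^2 ≤ 1 := by
    rw [div_le_one (by positivity)]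
    linarith [Real.cos_le_one c, pyγ]
  have hKm1 : -1 ≤ (cos c - cos γ^2)/sin γ^2 := by
    rw [le_div_iff₀ (by positivity)]
    nlinarith [mul_nonneg (sub_nonneg.mpr hcγsγ) (by positivity : (0:ℝ) ≤ cos γ + sin γ)]
  have hcosb : cos b = (cos c - cos γ^2)/sin γ^2 := by rw [hb, Real.cos_arccos hKm1 hK1]
  have hb0 : 0 ≤ b := hb ▸ Real.arccos_nonneg _
  have hbπ : b ≤ π := hb ▸ Real.arccos_le_pi _
  have hsinb : sin (b/2) = sin (c/2) / sin γ := by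
    rw [Real.sin_half_eq_sqrt hb0 (by linarith)]
    have h1 : (1 - cos b)/2 = (sin (c/2)/sin γ)^2 := by
      rw [hcosb]; field_simp
      linear_combination pyγ - hcosc
    rw [h1, Real.sqrt_sq (by positivity)]
  have hcosbb : cos (b/2) = Real.sqrt (sin γ^2 - sin (c/2)^2) / sin γ := by
    rw [Real.cos_half (by linarith) hbπ]
    have h1 : (1 + cos b)/2 = (sin γ^2 - sin (c/2)^2)/ sin γ^2 := by
      rw [hcosb]; field_simp
      linear_combination hcosc - pyγ
    rw [h1, Real.sqrt_div hWnn, Real.sqrt_sq hsγ.le]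
  set W := Real.sqrt (sin γ^2 - sin (c/2)^2) with hW
  have hW0 : 0 ≤ W := Real.sqrt_nonneg _
  have hW2 : W^2 = sin γ^2 - sin (c/2)^2 := Real.sq_sqrt hWnn
  have hTan : Real.tan (c/2) / Real.tan γ = sin (c/2) * cos γ / (sin γ * cos (c/2)) := by
    rw [Real.tan_eq_sin_div_cos, Real.tan_eq_sin_div_cos]
    rcases eq_or_ne (cos γ) 0 with h|h
    · simp [h]
    · field_simp
  set T := sin (c/2) * cos γ / (sin γ * cos (c/2)) with hTdef
  have hT0 : 0 ≤ T := by positivity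
  have hT1 : T ≤ 1 := by
    rw [hTdef, div_le_one (by positivity)]; nlinarith
  have hp' : p = Real.sqrt ((1 + T)/2) := by rw [hp, hTan]
  have hq' : q = Real.sqrt ((1 - T)/2) := by rw [hq, hTan]
  have hp0 : 0 ≤ p := hp' ▸ Real.sqrt_nonneg _
  have hq0 : 0 ≤ q := hq' ▸ Real.sqrt_nonneg _
  have hp2 : p^2 = (1+T)/2 := by rw [hp']; exact Real.sq_sqrt (by linarith)
  have hq2 : q^2 = (1-T)/2 := by rw [hq']; exact Real.sq_sqrt (by linarith)
  have hpqv : p * q = W / (2 * sin γ * cos (c/2)) := by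
    rw [hp', hq', ← Real.sqrt_mul (by linarith)]
    have h1 : (1+T)/2 * ((1-T)/2) = (W / (2 * sin γ * cos (c/2)))^2 := by
      rw [hTdef]; field_simp
      linear_combination -hW2 + Real.sin γ^2 * pyc - Real.sin (c/2)^2 * pyγ
    rw [h1, Real.sqrt_sq (by positivity)]
  have hI : sin (b/2) * sin γ = sin (c/2) := by rw [hsinb]; field_simp
  have hII : (p^2 - q^2) * cos (b/2) = 2*(p*q)*(sin (b/2)*cos γ) := by
    rw [hp2, hq2, hcosbb, hsinb, hpqv, hTdef]
    field_simp
    ring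
  have hIII : (p^2 - q^2) * (sin (b/2)*cos γ) + 2*(p*q)*cos (b/2) = cos (c/2) := by
    rw [hp2, hq2, hcosbb, hsinb, hpqv, hTdef]
    field_simp
    linear_combination 2 * hW2 + 2 * Real.sin (c/2)^2 * pyγ - 2 * Real.sin γ^2 * pyc
  have hpq1 : p^2 + q^2 = 1 := by rw [hp2, hq2]; ring
  -- half-angle facts for γ
  have pyγh := sin_sq_add_cos_sq (γ/2)
  have pyb := sin_sq_add_cos_sq (b/2)
  have hsγh : 2 * sin (γ/2) * cos (γ/2) = sin γ := by
    have h := Real.sin_two_mul (γ/2)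
    rw [show 2*(γ/2) = γ by ring] at h
    linarith
  have hcγh : cos (γ/2)^2 - sin (γ/2)^2 = cos γ := by
    have h := Real.cos_sq (γ/2)
    rw [show 2*(γ/2) = γ by ring] at h
    linarith
  clear hb hp hq hsinb hcosbb hp' hq' hp2 hq2 hpqv hcosb hTan hW hW2 hW0 hWnn hsc2 hT0 hT1 hK1 hKm1 hdiff hcosc hcc0
  -- matrix part
  have hE : ∀ x:ℝ, Complex.exp ((x:ℂ) * Complex.I) = (Real.cos x : ℂ) + (Real.sin x : ℂ) * Complex.I := by
    intro x; rw [Complex.exp_mul_I]; push_cast; ring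
  have hE' : ∀ x:ℝ, Complex.exp (-((x:ℂ) * Complex.I)) = (Real.cos x : ℂ) - (Real.sin x : ℂ) * Complex.I := by
    intro x
    rw [show -((x:ℂ)*Complex.I) = ((-x : ℝ):ℂ)*Complex.I by push_cast; ring, Complex.exp_mul_I]
    push_cast
    rw [Complex.cos_neg, Complex.sin_neg]
    ring
  have e1 : mexp ((Complex.I * ((γ : ℂ) / 2)) • σz) =
      !![(Real.cos (γ/2) : ℂ) + (Real.sin (γ/2) : ℂ) * Complex.I, 0;
         0, (Real.cos (γ/2) : ℂ) - (Real.sin (γ/2) : ℂ) * Complex.I] := by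
    rw [show (Complex.I * ((γ:ℂ)/2)) = ((γ/2 : ℝ):ℂ) * Complex.I by push_cast; ring,
        mexp_z, hE, hE']
  have e3 : mexp ((Complex.I * ((c : ℂ) / 2)) • σz) =
      !![(Real.cos (c/2) : ℂ) + (Real.sin (c/2) : ℂ) * Complex.I, 0;
         0, (Real.cos (c/2) : ℂ) - (Real.sin (c/2) : ℂ) * Complex.I] := by
    rw [show (Complex.I * ((c:ℂ)/2)) = ((c/2 : ℝ):ℂ) * Complex.I by push_cast; ring,
        mexp_z, hE, hE']
  have e2 : mexp ((((b + Real.pi : ℝ) : ℂ) * (Complex.I / 2)) • σy) =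
      !![(-(Real.sin (b/2)) : ℂ), (Real.cos (b/2) : ℂ);
         (-(Real.cos (b/2)) : ℂ), (-(Real.sin (b/2)) : ℂ)] := by
    rw [show ((((b + Real.pi : ℝ)):ℂ) * (Complex.I/2)) = (((b+Real.pi)/2 : ℝ):ℂ) * Complex.I by push_cast; ring,
        mexp_y, hE, hE',
        show (b+Real.pi)/2 = b/2 + Real.pi/2 by ring,
        Real.cos_add_pi_div_two, Real.sin_add_pi_div_two]
    ext i j
    fin_cases i <;> fin_cases j <;>
      (simp; try push_cast; try ring_nf; try simp [Complex.I_sq]; try push_cast; try ring)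
  rw [hU₁, hU₂, e1, e2, e3]
  have hI' : Real.sin (b/2) * (2*Real.sin (γ/2)*Real.cos (γ/2)) = Real.sin (c/2) := by
    rw [hsγh]; exact hI
  have hII' : (p^2 - q^2) * Real.cos (b/2) = 2*(p*q)*(Real.sin (b/2)*(Real.cos (γ/2)^2 - Real.sin (γ/2)^2)) := by
    rw [hcγh]; exact hII
  have hIII' : (p^2 - q^2) * (Real.sin (b/2)*(Real.cos (γ/2)^2 - Real.sin (γ/2)^2)) + 2*(p*q)*Real.cos (b/2) = Real.cos (c/2) := by
    rw [hcγh]; exact hIII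
  set sγ2 := Real.sin (γ/2) with hsγ2def
  set cγ2 := Real.cos (γ/2) with hcγ2def
  set sb := Real.sin (b/2) with hsbdef
  set cb := Real.cos (b/2) with hcbdef
  set sc2 := Real.sin (c/2) with hsc2def
  set cc2 := Real.cos (c/2) with hcc2def
  simp only [Matrix.mul_fin_two]
  ext i j
  fin_cases i <;> fin_cases j
  · simp [Complex.ext_iff]
    constructor
    · linear_combination hIII' + 2*p*q*cb*pyγh
    · linear_combination hI' + 2*sγ2*cγ2*sb*hpq1
  · simp [Complex.ext_iff]
    constructor
    · ring
    · linear_combination -hII' - (p^2-q^2)*cb*pyγh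
  · simp [Complex.ext_iff]
    constructor
    · ring
    · linear_combination -hII' - (p^2-q^2)*cb*pyγh
  · simp [Complex.ext_iff]
    constructor
    · linear_combination hIII' + 2*p*q*cb*pyγh
    · linear_combination -hI' - 2*sγ2*cγ2*sb*hpq1
end
end

section
/- In the special case γ = π/2 of the two-application circuit, b = c, p = q = 1/√2, and the identity becomes: (I⊗U₁)·exp((π/2)(i/2)σ_z⊗σ_z)·(I⊗exp((c+π)(i/2)σ_y))·exp((π/2)(i/2)σ_z⊗σ_z)·(I⊗U₂) = exp(c(i/2)σ_z⊗σ_z), where U₁ = (1/√2)[[i, i], [−1, 1]] and U₂ = (1/√2)[[i, −1], [−i, −1]], for all c ∈ (0, π/2]. -/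
open Matrix Kronecker

noncomputable section

lemma sy_exp (a : ℂ) : mexp (a • σy) =
    !![Complex.cosh a, -Complex.I * Complex.sinh a;
       Complex.I * Complex.sinh a, Complex.cosh a] := by
  have hP : (!![1, 1; Complex.I, -Complex.I] : Matrix (Fin 2) (Fin 2) ℂ) *
      ((1/2 : ℂ) • !![1, -Complex.I; 1, Complex.I]) = 1 := by
    ext i j
    fin_cases i <;> fin_cases j <;>
      simp [Matrix.mul_apply, Fin.sum_univ_two, Matrix.one_apply, Complex.ext_iff] <;>
      (try constructor) <;> (try trivial) <;> ring_nf <;>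
      simp [Complex.I_sq, Complex.ext_iff] <;> ring_nf <;> simp
  have hPinv : (!![1, 1; Complex.I, -Complex.I] : Matrix (Fin 2) (Fin 2) ℂ)⁻¹ =
      ((1/2 : ℂ) • !![1, -Complex.I; 1, Complex.I]) := Matrix.inv_eq_right_inv hP
  have hU : IsUnit (!![1, 1; Complex.I, -Complex.I] : Matrix (Fin 2) (Fin 2) ℂ) :=
    (Matrix.isUnit_iff_isUnit_det _).mpr (Matrix.isUnit_det_of_right_inverse hP)
  have hconj : a • σy = !![1, 1; Complex.I, -Complex.I] *
      Matrix.diagonal ![a, -a] * (!![1, 1; Complex.I, -Complex.I] : Matrix (Fin 2) (Fin 2) ℂ)⁻¹ := by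
    rw [hPinv]
    ext i j
    fin_cases i <;> fin_cases j <;>
      simp [σy, Matrix.mul_apply, Fin.sum_univ_two, Matrix.diagonal_apply,
        Matrix.vecMul_diagonal, Complex.ext_iff] <;>
      (try constructor) <;> (try trivial) <;> ring_nf <;>
      simp [Complex.I_sq, Complex.ext_iff] <;> ring_nf <;> simp
  rw [mexp, hconj, Matrix.exp_conj _ _ hU, Matrix.exp_diagonal, hPinv]
  ext i j
  fin_cases i <;> fin_cases j <;>
    simp [Matrix.mul_apply, Fin.sum_univ_two, Matrix.diagonal_apply,
      Matrix.vecMul_diagonal, Pi.exp_def, ← Complex.exp_eq_exp_ℂ,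
      Complex.cosh, Complex.sinh, Complex.I_sq] <;>
    (try constructor) <;> (try trivial) <;> ring_nf <;>
    simp [Complex.I_sq, Complex.ext_iff] <;> ring_nf <;> simp

lemma szz_exp (a : ℂ) : mexp (a • (σz ⊗ₖ σz)) =
    Matrix.diagonal (fun p : Fin 2 × Fin 2 =>
      if p.1 = p.2 then Complex.exp a else Complex.exp (-a)) := by
  have h : a • (σz ⊗ₖ σz) =
      Matrix.diagonal (fun p : Fin 2 × Fin 2 => if p.1 = p.2 then a else -a) := by
    ext ⟨i, j⟩ ⟨k, l⟩
    fin_cases i <;> fin_cases j <;> fin_cases k <;> fin_cases l <;>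
      simp [σz, Matrix.diagonal_apply, Matrix.kroneckerMap_apply, Prod.ext_iff]
  rw [mexp, h, Matrix.exp_diagonal]
  ext p q
  by_cases hpq : p = q
  · subst hpq
    by_cases h1 : p.1 = p.2 <;>
      simp [Matrix.diagonal_apply_eq, h1, Pi.exp_def, ← Complex.exp_eq_exp_ℂ]
  · simp [Matrix.diagonal_apply_ne _ hpq]

set_option maxHeartbeats 4000000 in
theorem stmt15 (c : ℝ) (hc : c ∈ Set.Ioc 0 (Real.pi / 2))
    (U₁ U₂ : Matrix (Fin 2) (Fin 2) ℂ)
    (hU₁ : U₁ = (1 / Real.sqrt 2 : ℂ) • !![Complex.I, Complex.I; -1, 1])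
    (hU₂ : U₂ = (1 / Real.sqrt 2 : ℂ) • !![Complex.I, -1; -Complex.I, -1]) :
    ((1 : Matrix (Fin 2) (Fin 2) ℂ) ⊗ₖ U₁) *
        mexp ((((Real.pi / 2 : ℝ) : ℂ) * (Complex.I / 2)) • (σz ⊗ₖ σz)) *
        ((1 : Matrix (Fin 2) (Fin 2) ℂ) ⊗ₖ
          mexp ((((c + Real.pi : ℝ) : ℂ) * (Complex.I / 2)) • σy)) *
        mexp ((((Real.pi / 2 : ℝ) : ℂ) * (Complex.I / 2)) • (σz ⊗ₖ σz)) *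
        ((1 : Matrix (Fin 2) (Fin 2) ℂ) ⊗ₖ U₂) =
      mexp (((c : ℂ) * (Complex.I / 2)) • (σz ⊗ₖ σz)) := by
  have hs0 : ((Real.sqrt 2 : ℝ) : ℂ) ≠ 0 :=
    Complex.ofReal_ne_zero.mpr (by positivity)
  have hE0 : Complex.exp ((c:ℂ) * (Complex.I/2)) ≠ 0 := Complex.exp_ne_zero _
  have hpi2 : Complex.exp ((Real.pi : ℂ) * Complex.I / 2) = Complex.I := by
    rw [show ((Real.pi:ℂ) * Complex.I / 2) = ((Real.pi/2 : ℝ) : ℂ) * Complex.I by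
        push_cast; ring,
      Complex.exp_mul_I, ← Complex.ofReal_cos, ← Complex.ofReal_sin,
      Real.cos_pi_div_two, Real.sin_pi_div_two]
    simp
  have h1 : Complex.exp ((Real.pi : ℂ) / 2 * (Complex.I / 2)) =
      (1 + Complex.I) * ((Real.sqrt 2 : ℝ) : ℂ) / 2 := by
    rw [show ((Real.pi:ℂ)/2 * (Complex.I/2)) = ((Real.pi/4 : ℝ) : ℂ) * Complex.I by
        push_cast; ring,
      Complex.exp_mul_I, ← Complex.ofReal_cos, ← Complex.ofReal_sin,
      Real.cos_pi_div_four, Real.sin_pi_div_four]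
    push_cast; ring
  have h2 : Complex.exp (-((Real.pi : ℂ) / 2 * (Complex.I / 2))) =
      (1 - Complex.I) * ((Real.sqrt 2 : ℝ) : ℂ) / 2 := by
    rw [show (-((Real.pi:ℂ)/2 * (Complex.I/2))) = ((-(Real.pi/4) : ℝ) : ℂ) * Complex.I by
        push_cast; ring,
      Complex.exp_mul_I, ← Complex.ofReal_cos, ← Complex.ofReal_sin,
      Real.cos_neg, Real.sin_neg, Real.cos_pi_div_four, Real.sin_pi_div_four]
    push_cast; ring
  have hexpA : Complex.exp (((c:ℂ) + (Real.pi:ℂ)) * (Complex.I / 2)) =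
      Complex.I * Complex.exp ((c:ℂ) * (Complex.I/2)) := by
    rw [show (((c:ℂ) + (Real.pi:ℂ)) * (Complex.I / 2)) =
        (c:ℂ) * (Complex.I/2) + (Real.pi:ℂ) * Complex.I / 2 by ring,
      Complex.exp_add, hpi2, mul_comm]
  have hexpA' : Complex.exp (-(((c:ℂ) + (Real.pi:ℂ)) * (Complex.I / 2))) =
      -Complex.I * (Complex.exp ((c:ℂ) * (Complex.I/2)))⁻¹ := by
    rw [Complex.exp_neg, hexpA, mul_inv, Complex.inv_I]; try ring
  have h3 : Complex.cosh (((c:ℂ) + (Real.pi:ℂ)) * (Complex.I / 2)) =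
      (Complex.I * Complex.exp ((c:ℂ) * (Complex.I/2)) -
        Complex.I * (Complex.exp ((c:ℂ) * (Complex.I/2)))⁻¹) / 2 := by
    rw [Complex.cosh, hexpA, hexpA']; ring
  have h4 : Complex.sinh (((c:ℂ) + (Real.pi:ℂ)) * (Complex.I / 2)) =
      (Complex.I * Complex.exp ((c:ℂ) * (Complex.I/2)) +
        Complex.I * (Complex.exp ((c:ℂ) * (Complex.I/2)))⁻¹) / 2 := by
    rw [Complex.sinh, hexpA, hexpA']; ring
  have h5 : Complex.exp (-((c:ℂ) * (Complex.I/2))) =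
      (Complex.exp ((c:ℂ) * (Complex.I/2)))⁻¹ := Complex.exp_neg _
  have hI2 : Complex.I ^ 2 = -1 := Complex.I_sq
  have hI3 : Complex.I ^ 3 = -Complex.I := by rw [pow_succ, hI2]; ring
  have hI4 : Complex.I ^ 4 = 1 := by rw [pow_succ, hI3]; simp [Complex.I_mul_I]
  have hI5 : Complex.I ^ 5 = Complex.I := by rw [pow_succ, hI4]; ring
  have hI6 : Complex.I ^ 6 = -1 := by rw [pow_succ, hI5]; simp [Complex.I_mul_I]
  have hI7 : Complex.I ^ 7 = -Complex.I := by rw [pow_succ, hI6]; ring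
  have hI8 : Complex.I ^ 8 = 1 := by rw [pow_succ, hI7]; simp [Complex.I_mul_I]
  rw [hU₁, hU₂, sy_exp, szz_exp, szz_exp]
  ext ⟨i, j⟩ ⟨k, l⟩
  fin_cases i <;> fin_cases j <;> fin_cases k <;> fin_cases l <;>
    simp only [Matrix.mul_apply, Fintype.sum_prod_type, Fin.sum_univ_two,
      Matrix.kroneckerMap_apply, Matrix.diagonal_apply, Matrix.one_apply,
      Matrix.smul_apply, Matrix.cons_val', Matrix.cons_val_zero, Matrix.cons_val_one,
      Matrix.head_cons, Matrix.head_fin_const, Matrix.empty_val',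
      Matrix.cons_val_fin_one, Matrix.cons_val_zero, smul_eq_mul, one_div,
      Prod.mk.injEq, Fin.isValue] <;>
    norm_num <;>
    simp only [h1, h2, h3, h4, h5] <;>
    field_simp <;>
    (try rw [div_add_div _ _ (by simp [hs0, hE0]) (by simp [hs0, hE0])]) <;>
    (try rw [div_eq_iff (by simp [hs0, hE0])]) <;>
    ring_nf <;>
    (try simp only [hI2, hI3, hI4, hI5, hI6, hI7, hI8]) <;>
    (try ring_nf) <;>
    (try field_simp)

end
end
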